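/- For every s in {1,...,d} and every monomial x_{l_1}...x_{l_{s-1}}x_{j_s} in G(B_t(x_{j_1}...x_{j_{s-1}}x_{j_s})), setting G = supp_t(x_{l_1}...x_{l_{s-1}}x_{j_s}) ∪ [j_s + 1, n], the monomial prime ideal P_{[n]∖G} contains B_t(u) and is a minimal prime of B_t(u). -/

import Mathlib

open Finset MvPolynomial

/-! Common definitions for principal vector-spread Borel ideals
(Crupi–Ficarra–Lax, "Principal vector-spread Borel ideals").

Throughout, `S = K[x_1,…,x_n]` is realized as `MvPolynomial (Fin n) K`, and the
variable `x_p` (1-based position `p ∈ [1,n]`) is `X (p-1)`. -/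

/-- The variable `x_p` of `K[x_1,…,x_n]`, for a 1-based position `p ∈ [1,n]`. -/
noncomputable def xv (K : Type*) [Field K] (n : ℕ) [NeZero n] (p : ℕ) :
    MvPolynomial (Fin n) K := MvPolynomial.X (Fin.ofNat n (p - 1))

/-- The squarefree monomial `x_{i 1} ⋯ x_{i e}` determined by the index function `i`. -/
noncomputable def monOf (K : Type*) [Field K] (n : ℕ) [NeZero n] (e : ℕ) (i : ℕ → ℕ) :
    MvPolynomial (Fin n) K := ∏ r ∈ Finset.Icc 1 e, xv K n (i r)

/-- Index functions of the `t`-spread monomials `x_{i 1} ⋯ x_{i e}` with `i r ≤ J r` for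
all `r = 1,…,e`.  (These monomials form the minimal monomial generating set of the
principal `t`-spread Borel ideal `B_t(x_{J 1} ⋯ x_{J e})`.) -/
def spreadIdx (e : ℕ) (t J : ℕ → ℕ) : Set (ℕ → ℕ) :=
  {i | (∀ r, 1 ≤ r → r ≤ e → 1 ≤ i r ∧ i r ≤ J r) ∧
    (∀ r, 1 ≤ r → r + 1 ≤ e → i r + t r ≤ i (r + 1))}

/-- The principal `t`-spread Borel ideal `B_t(x_{J 1} ⋯ x_{J e})`: the ideal generated by
all `t`-spread monomials `x_{i 1} ⋯ x_{i e}` with `i r ≤ J r` for all `r`. -/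
noncomputable def tBorel (K : Type*) [Field K] (n : ℕ) [NeZero n] (e : ℕ) (t J : ℕ → ℕ) :
    Ideal (MvPolynomial (Fin n) K) :=
  Ideal.span ((fun i => monOf K n e i) '' spreadIdx e t J)

/-- The monomial prime ideal `P_A = (x_p : p ∈ A)`, for a set `A` of 1-based positions. -/
noncomputable def pA (K : Type*) [Field K] (n : ℕ) [NeZero n] (A : Set ℕ) :
    Ideal (MvPolynomial (Fin n) K) := Ideal.span (xv K n '' A)

/-- The `t`-spread support `supp_t(x_{i 1} ⋯ x_{i e}) = ⋃_{s=1}^{e-1} [i s, i s + t s - 1]`. -/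
def tSupp (e : ℕ) (t : ℕ → ℕ) (i : ℕ → ℕ) : Set ℕ :=
  ⋃ s ∈ Finset.Icc 1 (e - 1), Set.Icc (i s) (i s + t s - 1)

/-- The `k`-th symbolic power of a (squarefree monomial) ideal: the intersection of the
`k`-th powers of its minimal primes. -/
noncomputable def symbPow {R : Type*} [CommRing R] (I : Ideal R) (k : ℕ) : Ideal R :=
  ⨅ P ∈ I.minimalPrimes, P ^ k

/-- The Alexander dual `⨅_{v} P_{supp v}` of the squarefree monomial ideal whose minimal
monomial generators are the degree `e` squarefree monomials indexed by `gen`. -/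
noncomputable def alexDualOf (K : Type*) [Field K] (n : ℕ) [NeZero n] (e : ℕ)
    (gen : Set (ℕ → ℕ)) : Ideal (MvPolynomial (Fin n) K) :=
  ⨅ i ∈ gen, pA K n (i '' Set.Icc 1 e)

/-- The height of an ideal: the infimum of the heights of its minimal primes, the height
of a prime being its height in the poset of prime ideals. -/
noncomputable def idealHeight {R : Type*} [CommRing R] (I : Ideal R) : ℕ∞ :=
  ⨅ (p : PrimeSpectrum R) (_ : p.asIdeal ∈ I.minimalPrimes), Order.height p

/-- The depth of the module `M` with respect to the ideal `P`: the supremum of the lengths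
of `M`-regular sequences consisting of elements of `P`. -/
noncomputable def depthWrt (R : Type*) (M : Type*) [CommRing R] [AddCommGroup M]
    [Module R M] (P : Ideal R) : ℕ∞ :=
  ⨆ (k : ℕ) (_ : ∃ x : Fin k → R, (∀ a, x a ∈ P) ∧
    RingTheory.Sequence.IsRegular M (List.ofFn x)), (k : ℕ∞)

/-- The (Krull) dimension of a module `M`: the Krull dimension of `R / ann M`. -/
noncomputable def modKrullDim (R : Type*) (M : Type*) [CommRing R] [AddCommGroup M]
    [Module R M] : WithBot ℕ∞ := ringKrullDim (R ⧸ Module.annihilator R M)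

/-- A module is Cohen–Macaulay (with respect to the ideal `P`, e.g. the graded maximal
ideal) if its depth equals its Krull dimension. -/
def IsCohenMacaulayMod (R : Type*) (M : Type*) [CommRing R] [AddCommGroup M] [Module R M]
    (P : Ideal R) : Prop := (depthWrt R M P : WithBot ℕ∞) = modKrullDim R M

/-- The depth of a local ring: max length of a regular sequence in the maximal ideal. -/
noncomputable def ringDepth (A : Type*) [CommRing A] [IsLocalRing A] : ℕ∞ :=
  depthWrt A A (IsLocalRing.maximalIdeal A)

/-- A local ring is Cohen–Macaulay if its depth equals its Krull dimension. -/
def IsCohenMacaulayLocalRing (A : Type*) [CommRing A] [IsLocalRing A] : Prop :=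
  (ringDepth A : WithBot ℕ∞) = ringKrullDim A

/-- A (commutative Noetherian) ring is Cohen–Macaulay if all its localizations at prime
ideals are Cohen–Macaulay local rings. -/
def IsCohenMacaulayRing (A : Type*) [CommRing A] : Prop :=
  ∀ (P : Ideal A) (hP : P.IsPrime), haveI := hP
    IsCohenMacaulayLocalRing (Localization.AtPrime P)

/-- The analytic spread of `I`: the Krull dimension of `R(I)/m R(I)`, where `R(I)` is the
Rees algebra of `I` and `m` the (graded maximal) ideal. -/
noncomputable def analyticSpread {R : Type*} [CommRing R] (m I : Ideal R) : WithBot ℕ∞ :=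
  ringKrullDim (↥(reesAlgebra I) ⧸ Ideal.map (algebraMap R ↥(reesAlgebra I)) m)

/-- `{p,q}` is an edge of the linear relation graph of the monomial ideal whose minimal
generators are the degree `e` squarefree monomials indexed by `gen` (positions 1-based,
within `[1,n]`). -/
def lrEdge (K : Type*) [Field K] (n : ℕ) [NeZero n] (e : ℕ) (gen : Set (ℕ → ℕ))
    (p q : ℕ) : Prop :=
  1 ≤ p ∧ p ≤ n ∧ 1 ≤ q ∧ q ≤ n ∧ p ≠ q ∧
    ∃ i ∈ gen, ∃ i' ∈ gen, xv K n p * monOf K n e i = xv K n q * monOf K n e i'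

/-- A facet of a simplicial complex: a maximal face. -/
def isFacet (Δ : Set (Finset ℕ)) (F : Finset ℕ) : Prop :=
  F ∈ Δ ∧ ∀ G ∈ Δ, F ⊆ G → F = G

/-- Vertex decomposability of a simplicial complex (faces as finsets of vertices):
either a simplex (including the void complex and `{∅}`), or there is a vertex whose
deletion and link are vertex decomposable and every facet of the deletion is a facet. -/
inductive VDecomp : Set (Finset ℕ) → Prop
  | empty : VDecomp ∅
  | simplex (A : Finset ℕ) : VDecomp {F | F ⊆ A}
  | step (Δ : Set (Finset ℕ)) (v : ℕ) (hv : ∃ F ∈ Δ, v ∈ F)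
      (hdel : VDecomp {F ∈ Δ | v ∉ F})
      (hlink : VDecomp {F | F ∈ Δ ∧ v ∉ F ∧ insert v F ∈ Δ})
      (hfac : ∀ F, isFacet {F ∈ Δ | v ∉ F} F → isFacet Δ F) : VDecomp Δ

/-- The `a`-th layer `J (a+1) / J a` of a filtration of ideals, as an `R`-module. -/
abbrev layerOf {R : Type*} [CommRing R] {r : ℕ} (J : Fin (r + 1) → Ideal R) (a : Fin r) :=
  ↥(J a.succ) ⧸ (Submodule.comap (J a.succ).subtype (J a.castSucc))


section AuxStmt3

open Classical in
/-- Evaluation killing the variables in `B`. -/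
noncomputable def killFun (K : Type*) [Field K] (n : ℕ) (B : Set (Fin n)) :
    Fin n → MvPolynomial (Fin n) K := fun b => if b ∈ B then 0 else X b

lemma sub_aeval_killFun_mem (K : Type*) [Field K] (n : ℕ) (B : Set (Fin n))
    (f : MvPolynomial (Fin n) K) :
    f - aeval (killFun K n B) f ∈
      Ideal.span (MvPolynomial.X '' B : Set (MvPolynomial (Fin n) K)) := by
  induction f using MvPolynomial.induction_on with
  | C a => simp
  | add p q hp hq =>
      have h := Ideal.add_mem _ hp hq
      have : p + q - aeval (killFun K n B) (p + q)
          = (p - aeval (killFun K n B) p) + (q - aeval (killFun K n B) q) := by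
        rw [map_add]; ring
      rw [this]; exact h
  | mul_X p b hp =>
      rw [map_mul, aeval_X, killFun]
      by_cases hb : b ∈ B
      · rw [if_pos hb, mul_zero, sub_zero]
        exact Ideal.mul_mem_left _ p (Ideal.subset_span ⟨b, hb, rfl⟩)
      · rw [if_neg hb]
        have : p * X b - aeval (killFun K n B) p * X b
            = (p - aeval (killFun K n B) p) * X b := by ring
        rw [this]
        exact Ideal.mul_mem_right _ _ hp

lemma span_X_eq_ker (K : Type*) [Field K] (n : ℕ) (B : Set (Fin n)) :
    Ideal.span (MvPolynomial.X '' B : Set (MvPolynomial (Fin n) K))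
      = RingHom.ker (MvPolynomial.aeval (killFun K n B)) := by
  apply le_antisymm
  · rw [Ideal.span_le]
    rintro _ ⟨b, hb, rfl⟩
    simp [RingHom.mem_ker, killFun, hb]
  · intro f hf
    rw [RingHom.mem_ker] at hf
    have h := sub_aeval_killFun_mem K n B f
    rwa [hf, sub_zero] at h

lemma isPrime_span_X (K : Type*) [Field K] (n : ℕ) (B : Set (Fin n)) :
    (Ideal.span (MvPolynomial.X '' B : Set (MvPolynomial (Fin n) K))).IsPrime := by
  rw [span_X_eq_ker]
  exact RingHom.ker_isPrime _

lemma X_mem_span_X (K : Type*) [Field K] (n : ℕ) (B : Set (Fin n)) (c : Fin n)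
    (h : (MvPolynomial.X c : MvPolynomial (Fin n) K) ∈
      Ideal.span (MvPolynomial.X '' B : Set (MvPolynomial (Fin n) K))) : c ∈ B := by
  rw [span_X_eq_ker, RingHom.mem_ker, aeval_X, killFun] at h
  by_contra hc
  rw [if_neg hc] at h
  exact MvPolynomial.X_ne_zero c h

lemma pA_eq (K : Type*) [Field K] (n : ℕ) [NeZero n] (A : Set ℕ) :
    pA K n A = Ideal.span (MvPolynomial.X ''
      ((fun p : ℕ => Fin.ofNat n (p - 1)) '' A) : Set (MvPolynomial (Fin n) K)) := by
  rw [pA, Set.image_image]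
  rfl

lemma pA_isPrime (K : Type*) [Field K] (n : ℕ) [NeZero n] (A : Set ℕ) :
    (pA K n A).IsPrime := by
  rw [pA_eq]; exact isPrime_span_X K n _

lemma xv_mem_pA (K : Type*) [Field K] (n : ℕ) [NeZero n] (A : Set ℕ)
    (hA : A ⊆ Set.Icc 1 n) (m : ℕ) (h1 : 1 ≤ m) (h2 : m ≤ n)
    (h : xv K n m ∈ pA K n A) : m ∈ A := by
  rw [pA_eq] at h
  have hc := X_mem_span_X K n _ _ h
  obtain ⟨a, ha, hae⟩ := hc
  have hA' := hA ha
  have hlt : a - 1 < n := by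
    have := hA'.2; have := hA'.1; omega
  have hlt' : m - 1 < n := by omega
  have heq : a - 1 = m - 1 := by
    have := congrArg Fin.val hae
    rwa [Fin.val_ofNat, Fin.val_ofNat, Nat.mod_eq_of_lt hlt, Nat.mod_eq_of_lt hlt'] at this
  have : a = m := by
    have := hA'.1; omega
  rwa [← this]

end AuxStmt3

/-- For every `s ∈ {1,…,d}` and every generator `x_{i 1}⋯x_{i (s-1)} x_{j s}` of
`B_t(x_{j 1}⋯x_{j s})` (an index function `i ∈ spreadIdx s t j` with `i s = j s`), setting
`G = supp_t(x_{i 1}⋯x_{i (s-1)} x_{j s}) ∪ [j s + 1, n]`, the monomial prime `P_{[n]∖G}`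
contains `B_t(u)` and is a minimal prime of `B_t(u)`. -/
theorem stmt3 (K : Type*) [Field K] (n d : ℕ) [NeZero n] (t j : ℕ → ℕ)
    (hd : 2 ≤ d) (ht : ∀ k, 1 ≤ k → k ≤ d - 1 → 1 ≤ t k)
    (hj1 : 1 ≤ j 1) (hjmono : ∀ p q, 1 ≤ p → p < q → q ≤ d → j p < j q)
    (hjd : j d = n) (hspread : ∀ k, 1 ≤ k → k ≤ d - 1 → j k + t k ≤ j (k + 1)) :
    ∀ s, 1 ≤ s → s ≤ d → ∀ i ∈ spreadIdx s t j, i s = j s →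
      tBorel K n d t j ≤ pA K n (Set.Icc 1 n \ (tSupp s t i ∪ Set.Icc (j s + 1) n)) ∧
      pA K n (Set.Icc 1 n \ (tSupp s t i ∪ Set.Icc (j s + 1) n))
        ∈ (tBorel K n d t j).minimalPrimes := by
  intro s hs1 hsd i hi his
  obtain ⟨hib, hisp⟩ := hi
  have jmono' : ∀ a b, 1 ≤ a → a ≤ b → b ≤ d → j a ≤ j b := by
    intro a b h1 h2 h3
    rcases eq_or_lt_of_le h2 with h | h
    · rw [h]
    · exact le_of_lt (hjmono a b h1 h h3)
  have jn : ∀ r, 1 ≤ r → r ≤ d → j r ≤ n := fun r h1 h2 => hjd ▸ jmono' r d h1 h2 le_rfl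
  have ichain : ∀ b a, 1 ≤ a → a < b → b ≤ s → i a + t a ≤ i b := by
    intro b
    induction b with
    | zero => intro a h1 h2 h3; omega
    | succ b ih =>
      intro a h1 h2 h3
      rcases Nat.lt_succ_iff_lt_or_eq.mp h2 with h | h
      · have h4 := ih a h1 h (by omega)
        have h5 := hisp b (by omega) h3
        omega
      · subst h; exact hisp a h1 h3
  have imono : ∀ a b, 1 ≤ a → a ≤ b → b ≤ s → i a ≤ i b := by
    intro a b h1 h2 h3
    rcases eq_or_lt_of_le h2 with h | h
    · rw [h]
    · have := ichain b a h1 h h3; omega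
  have ipos : ∀ r, 1 ≤ r → r ≤ s → 1 ≤ i r := fun r h1 h2 => (hib r h1 h2).1
  have iub : ∀ r, 1 ≤ r → r ≤ s → i r ≤ j r := fun r h1 h2 => (hib r h1 h2).2
  have tpos' : ∀ r, 1 ≤ r → r ≤ s - 1 → 1 ≤ t r := fun r h1 h2 => ht r h1 (by omega)
  have hGmem : ∀ x, x ∈ tSupp s t i ∪ Set.Icc (j s + 1) n ↔
      (∃ m, 1 ≤ m ∧ m ≤ s - 1 ∧ i m ≤ x ∧ x ≤ i m + t m - 1) ∨ (j s + 1 ≤ x ∧ x ≤ n) := by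
    intro x
    simp only [tSupp, Set.mem_union, Set.mem_iUnion, Finset.mem_Icc, Set.mem_Icc,
      exists_prop]
    constructor
    · rintro (⟨m, hm, h3, h4⟩ | h)
      · exact Or.inl ⟨m, hm.1, hm.2, h3, h4⟩
      · exact Or.inr h
    · rintro (⟨m, h1, h2, h3, h4⟩ | h)
      · exact Or.inl ⟨m, ⟨h1, h2⟩, h3, h4⟩
      · exact Or.inr h
  have M : ∀ m r, 1 ≤ m → m ≤ r → r ≤ s - 1 → i m + t m - 1 ≤ i r + t r - 1 := by
    intro m r h1 h2 h3
    rcases eq_or_lt_of_le h2 with h | h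
    · rw [h]
    · have := ichain r m h1 h (by omega); omega
  have L : ∀ x r, (x ∈ tSupp s t i ∪ Set.Icc (j s + 1) n) → 1 ≤ r → r + 1 ≤ s →
      x < i (r + 1) → x ≤ i r + t r - 1 := by
    intro x r hx h1 h2 hlt
    rcases (hGmem x).mp hx with ⟨m, hm1, hm2, hm3, hm4⟩ | ⟨h3, h4⟩
    · by_cases hmr : m ≤ r
      · exact le_trans hm4 (M m r hm1 hmr (by omega))
      · have := imono (r+1) m (by omega) (by omega) (by omega)
        omega
    · have h5 := imono (r+1) s (by omega) h2 le_rfl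
      rw [his] at h5
      omega
  have cover : ∀ i' ∈ spreadIdx d t j, ∃ r, 1 ≤ r ∧ r ≤ d ∧
      i' r ∈ Set.Icc 1 n \ (tSupp s t i ∪ Set.Icc (j s + 1) n) := by
    rintro i' ⟨hb', hsp'⟩
    by_contra hcon
    push_neg at hcon
    have hing : ∀ r, 1 ≤ r → r ≤ d → i' r ∈ tSupp s t i ∪ Set.Icc (j s + 1) n := by
      intro r h1 h2
      by_contra hg
      exact hcon r h1 h2 ⟨Set.mem_Icc.mpr ⟨(hb' r h1 h2).1,
        le_trans (hb' r h1 h2).2 (jn r h1 h2)⟩, hg⟩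
    rcases eq_or_lt_of_le hs1 with hseq | hs2
    · subst hseq
      have h := hing 1 le_rfl (by omega)
      rcases (hGmem (i' 1)).mp h with ⟨m, hm1, hm2, _, _⟩ | ⟨h3, _⟩
      · omega
      · have := (hb' 1 le_rfl (by omega)).2
        omega
    · have key : ∀ m, m ≤ s - 1 → i' (s - m) < i (s - m) := by
        intro m
        induction m with
        | zero =>
          intro _
          simp only [Nat.sub_zero]
          have hg := hing s hs1 hsd
          have hub : i' s ≤ j s := (hb' s hs1 hsd).2
          rcases (hGmem (i' s)).mp hg with ⟨m', hm1, hm2, hm3, hm4⟩ | ⟨h3, _⟩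
          · have h5 := M m' (s-1) hm1 hm2 le_rfl
            have h6 := ichain s (s-1) (by omega) (by omega) le_rfl
            have h7 := ipos (s-1) (by omega) (by omega)
            omega
          · omega
        | succ m ih =>
          intro hm
          have ihh := ih (by omega)
          have hr1 : 1 ≤ s - (m+1) := by omega
          have hr2 : s - (m+1) + 1 = s - m := by omega
          set r := s - (m+1) with hrdef
          rw [← hr2] at ihh
          have hxg := hing (r+1) (by omega) (by omega)
          have hL := L (i' (r+1)) r hxg hr1 (by omega) ihh
          have hsp2 := hsp' r hr1 (by omega)
          have := tpos' r hr1 (by omega)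
          omega
      have h1 := key (s-1) le_rfl
      have heq : s - (s-1) = 1 := by omega
      rw [heq] at h1
      have hg := hing 1 (by omega) (by omega)
      rcases (hGmem (i' 1)).mp hg with ⟨m, hm1, hm2, hm3, _⟩ | ⟨h3, _⟩
      · have := imono 1 m (by omega) hm1 (by omega)
        omega
      · have h4 := imono 1 s (by omega) hs1 le_rfl
        rw [his] at h4
        omega
  have hcont : tBorel K n d t j ≤
      pA K n (Set.Icc 1 n \ (tSupp s t i ∪ Set.Icc (j s + 1) n)) := by
    rw [tBorel, Ideal.span_le]
    rintro _ ⟨i', hi', rfl⟩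
    obtain ⟨r, hr1, hrd, hrA⟩ := cover i' hi'
    show monOf K n d i' ∈ pA K n _
    rw [monOf, ← Finset.mul_prod_erase _ _ (Finset.mem_Icc.mpr ⟨hr1, hrd⟩)]
    exact Ideal.mul_mem_right _ _ (Ideal.subset_span ⟨i' r, hrA, rfl⟩)
  have construct : ∀ p, p ∈ Set.Icc 1 n \ (tSupp s t i ∪ Set.Icc (j s + 1) n) →
      ∃ i'' ∈ spreadIdx d t j, ∀ r, 1 ≤ r → r ≤ d →
        (i'' r ∈ tSupp s t i ∪ Set.Icc (j s + 1) n) ∨ i'' r = p := by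
    intro p hp
    obtain ⟨hpI, hpG⟩ := hp
    rw [Set.mem_Icc] at hpI
    have hpsupp : ∀ m, 1 ≤ m → m ≤ s - 1 → ¬(i m ≤ p ∧ p ≤ i m + t m - 1) := by
      intro m h1 h2 hc
      exact hpG ((hGmem p).mpr (Or.inl ⟨m, h1, h2, hc.1, hc.2⟩))
    have hpjs : p ≤ j s := by
      by_contra hc
      exact hpG ((hGmem p).mpr (Or.inr ⟨by omega, hpI.2⟩))
    set k := Nat.findGreatest (fun m => i m + t m ≤ p) (s - 1) with hk
    have hkle : k ≤ s - 1 := Nat.findGreatest_le _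
    have hkspec : 1 ≤ k → i k + t k ≤ p := by
      intro h
      exact Nat.findGreatest_of_ne_zero (P := fun m => i m + t m ≤ p) hk.symm (by omega)
    have hkgreat : ∀ m, k < m → m ≤ s - 1 → p < i m + t m := by
      intro m h1 h2
      have := Nat.findGreatest_is_greatest (P := fun m => i m + t m ≤ p)
        (by rw [← hk]; exact h1) h2
      omega
    have hklt : k + 1 ≤ s - 1 → p < i (k + 1) := by
      intro h
      have h1 := hkgreat (k+1) (by omega) h
      have h2 := hpsupp (k+1) (by omega) h
      have h3 := tpos' (k+1) (by omega) h
      omega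
    refine ⟨fun r => if r ≤ k then i r else if r = k+1 then p
      else if r ≤ s then i (r-1) + t (r-1) - 1 else j r, ⟨?_, ?_⟩, ?_⟩
    · intro r h1 h2
      by_cases ha : r ≤ k
      · simp only [if_pos ha]
        exact hib r h1 (by omega)
      · simp only [if_neg ha]
        by_cases hb2 : r = k+1
        · simp only [if_pos hb2]
          constructor
          · omega
          · by_cases hc : k+1 ≤ s-1
            · have h3 := hklt hc
              have h4 := iub (k+1) (by omega) (by omega)
              rw [hb2]; omega
            · have hks : k + 1 = s := by omega
              rw [hb2, hks]
              exact hpjs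
        · simp only [if_neg hb2]
          by_cases hcc : r ≤ s
          · simp only [if_pos hcc]
            have hr2 : k + 2 ≤ r := by omega
            have h3 := hisp (r-1) (by omega) (by omega)
            have hrr : r - 1 + 1 = r := by omega
            rw [hrr] at h3
            have h4 := iub r (by omega) hcc
            have h5 := ipos (r-1) (by omega) (by omega)
            have h6 := tpos' (r-1) (by omega) (by omega)
            constructor <;> omega
          · simp only [if_neg hcc]
            refine ⟨?_, le_rfl⟩
            have := jmono' 1 r le_rfl (by omega) h2
            omega
    · intro r h1 h2
      by_cases ha : r + 1 ≤ k
      · simp only [if_pos (show r ≤ k by omega), if_pos ha]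
        exact hisp r h1 (by omega)
      · by_cases hb2 : r ≤ k
        · have hrk : r = k := by omega
          simp only [if_pos hb2, if_neg ha, if_pos (show r+1 = k+1 by omega)]
          rw [hrk]
          exact hkspec (by omega)
        · by_cases hc : r = k+1
          · simp only [if_neg hb2, if_pos hc, if_neg ha,
              if_neg (show ¬ r+1 = k+1 by omega)]
            by_cases hd2 : r + 1 ≤ s
            · simp only [if_pos hd2]
              have h3 := hklt (by omega)
              have h4 := tpos' (k+1) (by omega) (by omega)
              have hrr : r + 1 - 1 = r := by omega
              rw [hrr, hc]
              omega
            · simp only [if_neg hd2]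
              have hrs : r = s := by omega
              have h3 := hspread s hs1 (by omega)
              rw [hrs]
              omega
          · simp only [if_neg hb2, if_neg hc, if_neg ha,
              if_neg (show ¬ r+1 = k+1 by omega)]
            by_cases hd2 : r ≤ s
            · simp only [if_pos hd2]
              by_cases he : r + 1 ≤ s
              · simp only [if_pos he]
                have h3 := hisp (r-1) (by omega) (by omega)
                have hrr : r - 1 + 1 = r := by omega
                rw [hrr] at h3
                have hrr2 : r + 1 - 1 = r := by omega
                rw [hrr2]
                have h5 := ipos (r-1) (by omega) (by omega)
                omega
              · simp only [if_neg he]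
                have h3 := hisp (r-1) (by omega) (by omega)
                have hrr : r - 1 + 1 = r := by omega
                rw [hrr] at h3
                have h4 := hspread r (by omega) (by omega)
                have h5 := iub r (by omega) hd2
                have h6 := ipos (r-1) (by omega) (by omega)
                omega
            · simp only [if_neg hd2, if_neg (show ¬ r+1 ≤ s by omega)]
              exact hspread r h1 (by omega)
    · intro r h1 h2
      by_cases ha : r ≤ k
      · left
        simp only [if_pos ha]
        refine (hGmem (i r)).mpr (Or.inl ⟨r, h1, by omega, le_rfl, ?_⟩)
        have := tpos' r h1 (by omega)
        omega
      · by_cases hb2 : r = k+1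
        · right
          simp only [if_neg ha, if_pos hb2]
        · by_cases hcc : r ≤ s
          · left
            simp only [if_neg ha, if_neg hb2, if_pos hcc]
            refine (hGmem _).mpr (Or.inl ⟨r-1, by omega, by omega, ?_, le_rfl⟩)
            have := tpos' (r-1) (by omega) (by omega)
            omega
          · left
            simp only [if_neg ha, if_neg hb2, if_neg hcc]
            refine (hGmem _).mpr (Or.inr ⟨?_, jn r h1 h2⟩)
            have := hjmono s r hs1 (by omega) h2
            omega
  refine ⟨hcont, ⟨pA_isPrime K n _, hcont⟩, ?_⟩
  rintro q ⟨hq, hIq⟩ hqP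
  rw [pA, Ideal.span_le]
  rintro _ ⟨p, hp, rfl⟩
  obtain ⟨i'', hi''sp, hval⟩ := construct p hp
  have hmem : monOf K n d i'' ∈ q := hIq (Ideal.subset_span ⟨i'', hi''sp, rfl⟩)
  rw [monOf] at hmem
  haveI := hq
  rw [Ideal.IsPrime.prod_mem_iff] at hmem
  obtain ⟨r, hrmem, hxr⟩ := hmem
  rw [Finset.mem_Icc] at hrmem
  obtain ⟨hbnds, _⟩ := hi''sp
  have hbnd := hbnds r hrmem.1 hrmem.2
  have hrA : i'' r ∈ Set.Icc 1 n \ (tSupp s t i ∪ Set.Icc (j s + 1) n) :=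
    xv_mem_pA K n _ (fun x hx => hx.1) (i'' r) hbnd.1
      (le_trans hbnd.2 (jn r hrmem.1 hrmem.2)) (hqP hxr)
  rcases hval r hrmem.1 hrmem.2 with hg | hpeq
  · exact absurd hg hrA.2
  · rw [← hpeq]
    exact hxr
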